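/- Let P, P' be finite H-forests and φ : P → P' an epimorphism. Then: (i) for every maximal chain B of P there is a maximal chain B' of P' with φ[B] ⊆ B'; (ii) for every maximal chain B' of P' there is a maximal chain B of P with φ[B] = B'. -/

import Mathlib

/-- The Hasse relation of a partial order: `a R b` iff `a = b` or one covers the other. -/
def HasseRel {P : Type*} [PartialOrder P] (a b : P) : Prop :=
  a = b ∨ a ⋖ b ∨ b ⋖ a

/-- An epimorphism of finite partial orders (with their Hasse relations): a surjection such
that the order and the Hasse relation on the codomain are exactly the images of the
corresponding relations on the domain. -/
def IsPosetEpi {Q P : Type*} [PartialOrder Q] [PartialOrder P] (φ : Q → P) : Prop :=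
  Function.Surjective φ ∧
    (∀ a b : Q, a ≤ b → φ a ≤ φ b) ∧
    (∀ a b : Q, HasseRel a b → HasseRel (φ a) (φ b)) ∧
    (∀ a b : P, a ≤ b → ∃ a' b' : Q, a' ≤ b' ∧ φ a' = a ∧ φ b' = b) ∧
    (∀ a b : P, HasseRel a b → ∃ a' b' : Q, HasseRel a' b' ∧ φ a' = a ∧ φ b' = b)

/-- The Hasse diagram of a partial order, as a simple graph. -/
def hasseGraph (P : Type*) [PartialOrder P] : SimpleGraph P :=
  SimpleGraph.fromRel (fun a b => HasseRel a b)

/-- An H-forest is a partial order whose Hasse diagram contains no cycles. -/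
def IsHForest (P : Type*) [PartialOrder P] : Prop :=
  (hasseGraph P).IsAcyclic

/-- The maximal chains of the partial order are pairwise disjoint (membership in `F₀`). -/
def HasDisjointMaxChains (P : Type*) [PartialOrder P] : Prop :=
  ∀ C C' : Set P, IsMaxChain (· ≤ ·) C → IsMaxChain (· ≤ ·) C' → C ≠ C' → Disjoint C C'

section Aux
variable {X : Type*} [PartialOrder X]

lemma hasse_adj_of_covBy {a b : X} (h : a ⋖ b) : (hasseGraph X).Adj a b := by
  rw [hasseGraph, SimpleGraph.fromRel_adj]
  exact ⟨h.ne, Or.inl (Or.inr (Or.inl h))⟩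

lemma walk_of_chain : ∀ (l : List X) (a b : X), List.Chain (· ⋖ ·) a l →
    (a :: l).getLast (List.cons_ne_nil a l) = b →
    ∃ w : (hasseGraph X).Walk a b, w.support = a :: l := by
  intro l
  induction l with
  | nil =>
    intro a b _ hlast
    simp only [List.getLast_singleton] at hlast
    subst hlast
    exact ⟨SimpleGraph.Walk.nil, by simp⟩
  | cons c t ih =>
    intro a b hchain hlast
    replace hchain := List.isChain_cons_cons.mp hchain
    have hlast' : (c :: t).getLast (List.cons_ne_nil c t) = b := by
      rw [List.getLast_cons (List.cons_ne_nil c t)] at hlast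
      exact hlast
    obtain ⟨w, hw⟩ := ih c b hchain.2 hlast'
    exact ⟨SimpleGraph.Walk.cons (hasse_adj_of_covBy hchain.1) w, by simp [hw]⟩

lemma chain_covBy_nodup (a : X) (l : List X) (h : List.Chain (· ⋖ ·) a l) :
    (a :: l).Nodup := by
  have h' : List.Chain' (· < ·) (a :: l) := List.Chain.imp (fun _ _ hc => hc.lt) h
  exact (List.isChain_iff_pairwise.mp h').imp ne_of_lt

lemma chain_unique (hF : IsHForest X) (l₁ l₂ : List X)
    (h₁ : l₁.Chain' (· ⋖ ·)) (h₂ : l₂.Chain' (· ⋖ ·))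
    (hne₁ : l₁ ≠ []) (hne₂ : l₂ ≠ [])
    (hh : l₁.head? = l₂.head?) (hl : l₁.getLast? = l₂.getLast?) : l₁ = l₂ := by
  obtain ⟨a₁, t₁, rfl⟩ := List.exists_cons_of_ne_nil hne₁
  obtain ⟨a₂, t₂, rfl⟩ := List.exists_cons_of_ne_nil hne₂
  simp only [List.head?_cons, Option.some.injEq] at hh
  subst hh
  rw [List.getLast?_eq_getLast (List.cons_ne_nil _ _),
      List.getLast?_eq_getLast (List.cons_ne_nil _ _), Option.some.injEq] at hl
  obtain ⟨w₁, hw₁⟩ := walk_of_chain t₁ a₁ ((a₁ :: t₁).getLast (List.cons_ne_nil _ _)) h₁ rfl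
  obtain ⟨w₂, hw₂⟩ := walk_of_chain t₂ a₁ ((a₁ :: t₁).getLast (List.cons_ne_nil _ _)) h₂ hl.symm
  have hp₁ : w₁.IsPath := by
    rw [SimpleGraph.Walk.isPath_def, hw₁]; exact chain_covBy_nodup _ _ h₁
  have hp₂ : w₂.IsPath := by
    rw [SimpleGraph.Walk.isPath_def, hw₂]; exact chain_covBy_nodup _ _ h₂
  have hweq : w₁ = w₂ := Subtype.mk_eq_mk.mp (hF.path_unique ⟨w₁, hp₁⟩ ⟨w₂, hp₂⟩)
  rw [← hw₁, ← hw₂, hweq]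

lemma exists_sorted_list (s : Finset X) (hs : IsChain (· ≤ ·) (s : Set X)) :
    ∃ l : List X, l.Chain' (· < ·) ∧ ∀ x, x ∈ l ↔ x ∈ s := by
  classical
  induction s using Finset.strongInduction with
  | _ s ih =>
    rcases s.eq_empty_or_nonempty with rfl | hne
    · exact ⟨[], List.isChain_nil, by simp⟩
    · obtain ⟨m, hm, hmin⟩ : ∃ m ∈ s, ∀ x ∈ s, x ≤ m → m = x := by
        obtain ⟨m, hm, hmin⟩ := (s : Set X).toFinite.exists_minimal hne.to_set
        exact ⟨m, hm, fun x hx h => le_antisymm (hmin hx h) h⟩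
      have hleast : ∀ x ∈ s, m ≤ x := by
        intro x hx
        rcases eq_or_ne m x with rfl | hne'
        · exact le_refl _
        · rcases hs hm hx hne' with h | h
          · exact h
          · exact le_of_eq (hmin x hx h)
      obtain ⟨l, hl, hmem⟩ := ih (s.erase m) (Finset.erase_ssubset hm)
        (hs.mono (by simp [Finset.coe_subset, Finset.erase_subset]))
      refine ⟨m :: l, ?_, ?_⟩
      · show List.IsChain _ _; rw [List.isChain_cons]
        refine ⟨fun y hy => ?_, hl⟩
        have hy' : y ∈ l := by
          cases l with
          | nil => simp at hy
          | cons c t => simp at hy; simp [hy]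
        have := (hmem y).mp hy'
        rw [Finset.mem_erase] at this
        exact lt_of_le_of_ne (hleast y this.2) (Ne.symm this.1)
      · intro x
        simp only [List.mem_cons, hmem, Finset.mem_erase]
        constructor
        · rintro (rfl | ⟨_, h⟩)
          · exact hm
          · exact h
        · intro hx
          rcases eq_or_ne x m with rfl | h
          · exact Or.inl rfl
          · exact Or.inr ⟨h, hx⟩

end Aux

section Aux2
variable {X : Type*} [PartialOrder X]

lemma IsMaxChain.mem_of_comparable {B : Set X} (hB : IsMaxChain (· ≤ ·) B) {z : X}
    (hz : ∀ b ∈ B, z ≤ b ∨ b ≤ z) : z ∈ B := by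
  have hch : IsChain (· ≤ ·) (insert z B) := hB.1.insert (fun b hb _ => hz b hb)
  have heq := hB.2 hch (Set.subset_insert z B)
  rw [heq]
  exact Set.mem_insert _ _

lemma maxChain_enum {B : Set X} (hB : IsMaxChain (· ≤ ·) B) (hfin : B.Finite)
    (hne : B.Nonempty) :
    ∃ (a : X) (t : List X),
      (a :: t).Chain' (· ⋖ ·) ∧ (∀ x, x ∈ a :: t ↔ x ∈ B) ∧
      (∀ x ∈ B, a ≤ x) ∧ (∀ x ∈ B, x ≤ (a :: t).getLast (List.cons_ne_nil a t)) ∧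
      IsMin a ∧ IsMax ((a :: t).getLast (List.cons_ne_nil a t)) := by
  classical
  obtain ⟨l, hl, hmem₀⟩ := exists_sorted_list hfin.toFinset
    (by rw [Set.Finite.coe_toFinset]; exact hB.1)
  have hmem : ∀ x, x ∈ l ↔ x ∈ B := by
    intro x; rw [hmem₀ x, Set.Finite.mem_toFinset]
  have hlne : l ≠ [] := by
    obtain ⟨x, hx⟩ := hne
    exact List.ne_nil_of_mem ((hmem x).mpr hx)
  obtain ⟨a, t, rfl⟩ := List.exists_cons_of_ne_nil hlne
  have hpw : List.Pairwise (· < ·) (a :: t) := List.isChain_iff_pairwise.mp hl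
  have hmono : ∀ i j : Fin (a :: t).length, (i : ℕ) < j →
      (a :: t).get i < (a :: t).get j := fun i j hij => List.pairwise_iff_get.mp hpw i j hij
  have hmono' : ∀ i j : Fin (a :: t).length, (i : ℕ) ≤ j →
      (a :: t).get i ≤ (a :: t).get j := by
    intro i j hij
    rcases Nat.lt_or_ge (i : ℕ) (j : ℕ) with h | h
    · exact (hmono i j h).le
    · have : (i : ℕ) = (j : ℕ) := le_antisymm hij h
      have : i = j := Fin.ext this
      rw [this]
  have hidx : ∀ x ∈ B, ∃ i, (a :: t).get i = x := by
    intro x hx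
    exact List.mem_iff_get.mp ((hmem x).mpr hx)
  have hhead : ∀ x ∈ B, a ≤ x := by
    intro x hx
    obtain ⟨i, rfl⟩ := hidx x hx
    exact hmono' ⟨0, by simp⟩ i (Nat.zero_le _)
  have hlasteq : (a :: t).getLast (List.cons_ne_nil a t) =
      (a :: t).get ⟨(a :: t).length - 1, by simp⟩ := List.getLast_eq_getElem _
  have hlast : ∀ x ∈ B, x ≤ (a :: t).getLast (List.cons_ne_nil a t) := by
    intro x hx
    obtain ⟨i, rfl⟩ := hidx x hx
    rw [hlasteq]
    exact hmono' i _ (Nat.le_sub_one_of_lt i.isLt)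
  refine ⟨a, t, ?_, hmem, hhead, hlast, ?_, ?_⟩
  · show List.IsChain _ _; rw [List.isChain_iff_getElem]
    intro i hi
    have hlt : (a :: t).get ⟨i, by omega⟩ < (a :: t).get ⟨i + 1, by omega⟩ :=
      List.isChain_iff_getElem.mp hl i hi
    refine ⟨hlt, fun z hxz hzy => ?_⟩
    have hzB : z ∈ B := by
      refine hB.mem_of_comparable (fun b hb => ?_)
      obtain ⟨j, rfl⟩ := hidx b hb
      rcases le_or_gt (j : ℕ) i with h | h
      · exact Or.inr (((hmono' j ⟨i, by omega⟩ h).trans_lt hxz).le)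
      · exact Or.inl ((hzy.trans_le (hmono' ⟨i + 1, by omega⟩ j h)).le)
    obtain ⟨j, hj⟩ := hidx z hzB
    rcases le_or_gt (j : ℕ) i with h | h
    · exact absurd (hj ▸ hmono' j ⟨i, by omega⟩ h : z ≤ _) (not_le_of_gt hxz)
    · exact absurd (hj ▸ hmono' ⟨i + 1, by omega⟩ j h : _ ≤ z) (not_le_of_gt hzy)
  · intro z hz
    have hzB : z ∈ B := hB.mem_of_comparable
      (fun b hb => Or.inl (hz.trans (hhead b hb)))
    exact hhead z hzB
  · intro z hz
    have hzB : z ∈ B := hB.mem_of_comparable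
      (fun b hb => Or.inr ((hlast b hb).trans hz))
    exact hlast z hzB

lemma dedup_chain : ∀ l : List X, l.Chain' (fun x y => x = y ∨ x ⋖ y) →
    ∃ m : List X, m.Chain' (· ⋖ ·) ∧ (∀ x, x ∈ m ↔ x ∈ l) ∧
      m.head? = l.head? ∧ m.getLast? = l.getLast? := by
  intro l
  induction l with
  | nil => exact fun _ => ⟨[], List.isChain_nil, by simp, rfl, rfl⟩
  | cons a t ih =>
    intro hl
    cases t with
    | nil => exact ⟨[a], List.isChain_singleton a, by simp, rfl, rfl⟩
    | cons b t' =>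
      replace hl := List.isChain_cons_cons.mp hl
      obtain ⟨m, hm, hmem, hhead, hlast⟩ := ih hl.2
      have hmne : m ≠ [] := by
        intro h
        rw [h] at hhead
        simp at hhead
      rcases hl.1 with rfl | hcov
      · refine ⟨m, hm, ?_, ?_, ?_⟩
        · intro x
          rw [hmem x]
          simp [List.mem_cons]
        · rw [hhead]; rfl
        · rw [hlast, List.getLast?_cons_cons]
      · refine ⟨a :: m, ?_, ?_, rfl, ?_⟩
        · show List.IsChain _ _; rw [List.isChain_cons]
          refine ⟨fun y hy => ?_, hm⟩
          rw [hhead] at hy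
          simp only [List.head?_cons, Option.mem_def, Option.some.injEq] at hy
          exact hy ▸ hcov
        · intro x
          simp only [List.mem_cons, hmem x]
        · obtain ⟨c, m', rfl⟩ := List.exists_cons_of_ne_nil hmne
          rw [List.getLast?_cons_cons, hlast, List.getLast?_cons_cons]

end Aux2


/-- Behaviour of maximal chains under epimorphisms of finite H-forests. -/
theorem stmt_4 (P P' : Type*) [Fintype P] [Fintype P'] [PartialOrder P] [PartialOrder P']
    (hP : IsHForest P) (hP' : IsHForest P') (φ : P → P') (hφ : IsPosetEpi φ) :
    (∀ B : Set P, IsMaxChain (· ≤ ·) B →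
      ∃ B' : Set P', IsMaxChain (· ≤ ·) B' ∧ φ '' B ⊆ B') ∧
    (∀ B' : Set P', IsMaxChain (· ≤ ·) B' →
      ∃ B : Set P, IsMaxChain (· ≤ ·) B ∧ φ '' B = B') := by
  obtain ⟨hsurj, hmono, hhasse, hliftle, hlifth⟩ := hφ
  constructor
  · intro B hB
    have hch : IsChain (· ≤ ·) (φ '' B) := by
      rintro _ ⟨x, hx, rfl⟩ _ ⟨y, hy, rfl⟩ hne
      rcases eq_or_ne x y with rfl | hxy
      · exact absurd rfl hne
      · rcases hB.1 hx hy hxy with h | h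
        · exact Or.inl (hmono x y h)
        · exact Or.inr (hmono y x h)
    obtain ⟨B', hB', hsub⟩ := hch.exists_maxChain
    exact ⟨B', hB', hsub⟩
  · intro B' hB'
    by_cases hPE : IsEmpty P'
    · have hBE : B' = ∅ := Set.eq_empty_of_isEmpty B'
      haveI : IsEmpty P := ⟨fun p => hPE.false (φ p)⟩
      exact ⟨∅, ⟨IsChain.empty, fun t _ _ => (Set.eq_empty_of_isEmpty t).symm⟩,
        by simp [hBE]⟩
    · have hne' : B'.Nonempty := by
        rcases Set.eq_empty_or_nonempty B' with rfl | h
        · rw [not_isEmpty_iff] at hPE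
          obtain ⟨x⟩ := hPE
          have hemp := hB'.2 (IsChain.singleton (a := x)) (Set.empty_subset _)
          exact absurd hemp.symm (Set.singleton_ne_empty x)
        · exact h
      obtain ⟨b0, t', hch', hmem', hhead', hlast', hmin0, hmaxn⟩ :=
        maxChain_enum hB' (Set.toFinite B') hne'
      set bn := (b0 :: t').getLast (List.cons_ne_nil b0 t') with hbn
      have hb0bn : b0 ≤ bn := hhead' bn ((hmem' bn).mp (List.getLast_mem _))
      obtain ⟨u, v, huv, hu, hv⟩ := hliftle b0 bn hb0bn
      have hpair : IsChain (· ≤ ·) ({u, v} : Set P) := by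
        intro x hx y hy hxy
        simp only [Set.mem_insert_iff, Set.mem_singleton_iff] at hx hy
        rcases hx with rfl | rfl <;> rcases hy with rfl | rfl
        · exact absurd rfl hxy
        · exact Or.inl huv
        · exact Or.inr huv
        · exact absurd rfl hxy
      obtain ⟨A, hA, hsubA⟩ := hpair.exists_maxChain
      have huA : u ∈ A := hsubA (Set.mem_insert _ _)
      have hvA : v ∈ A := hsubA (Set.mem_insert_of_mem _ rfl)
      have hAne : A.Nonempty := ⟨u, huA⟩
      obtain ⟨a0, s, hchA, hmemA, hheadA, hlastA, -, -⟩ :=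
        maxChain_enum hA (Set.toFinite A) hAne
      set am := (a0 :: s).getLast (List.cons_ne_nil a0 s) with ham
      have hφa0 : φ a0 = b0 := by
        have h1 : φ a0 ≤ b0 := hu ▸ hmono a0 u (hheadA u huA)
        exact le_antisymm h1 (hmin0 h1)
      have hφam : φ am = bn := by
        have h1 : bn ≤ φ am := hv ▸ hmono v am (hlastA v hvA)
        exact le_antisymm (hmaxn h1) h1
      have covimg : ∀ a b : P, a ⋖ b → φ a = φ b ∨ φ a ⋖ φ b := by
        intro a b h
        have hh := hhasse a b (Or.inr (Or.inl h))
        have hle : φ a ≤ φ b := hmono a b h.le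
        rcases hh with he | hc | hc
        · exact Or.inl he
        · exact Or.inr hc
        · exact absurd (hc.lt.trans_le hle) (lt_irrefl _)
      have hmapchain : ((a0 :: s).map φ).Chain' (fun x y => x = y ∨ x ⋖ y) := by
        show List.IsChain _ _; rw [List.isChain_map]
        exact List.IsChain.imp (fun a b hab => covimg a b hab) hchA
      obtain ⟨M, hM, hMmem, hMhead, hMlast⟩ := dedup_chain _ hmapchain
      have hMhead' : M.head? = some b0 := by
        rw [hMhead]; simp [hφa0]
      have hMne : M ≠ [] := by
        intro h; rw [h] at hMhead'; simp at hMhead'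
      have hMlast' : M.getLast? = some bn := by
        rw [hMlast, List.getLast?_map, List.getLast?_eq_getLast (List.cons_ne_nil a0 s)]
        simp [← ham, hφam]
      have hEq : M = b0 :: t' :=
        chain_unique hP' M (b0 :: t') hM hch' hMne (List.cons_ne_nil _ _)
          (by rw [hMhead']; rfl)
          (by rw [hMlast', List.getLast?_eq_getLast (List.cons_ne_nil b0 t')])
      refine ⟨A, hA, ?_⟩
      ext x
      simp only [Set.mem_image]
      constructor
      · rintro ⟨a, haA, rfl⟩
        have h1 : φ a ∈ (a0 :: s).map φ := List.mem_map_of_mem ((hmemA a).mpr haA)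
        have h2 := (hMmem _).mpr h1
        rw [hEq] at h2
        exact (hmem' _).mp h2
      · intro hx
        have h1 : x ∈ M := by rw [hEq]; exact (hmem' x).mpr hx
        obtain ⟨a, ha, rfl⟩ := List.mem_map.mp ((hMmem x).mp h1)
        exact ⟨a, (hmemA a).mp ha, rfl⟩
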